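/- The a-majorization relation is transitive: if p, q, r are supported-below probability distributions on ℤ with p ≻_a q and q ≻_a r, then p ≻_a r. Together with reflexivity (p ≻_a p, since p*p̃ = δ_0 ≥ 0), ≻_a is a preorder. -/

import Mathlib

/-- Convolution of two sequences on `ℤ`: `(a*b)(n) = ∑_{k∈ℤ} a(k)·b(n−k)`.
For supported-below sequences this `tsum` has finitely many nonzero terms. -/
noncomputable def conv (a b : ℤ → ℝ) : ℤ → ℝ := fun n => ∑' k : ℤ, a k * b (n - k)

/-- A sequence is supported below if it vanishes for all sufficiently negative indices. -/
def SuppBelow (a : ℤ → ℝ) : Prop := ∃ N : ℤ, ∀ n : ℤ, n < N → a n = 0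


noncomputable def toHahn (a : ℤ → ℝ) (h : SuppBelow a) : HahnSeries ℤ ℝ :=
  ⟨a, by
    obtain ⟨N, hN⟩ := h
    have hb : BddBelow (Function.support a) := ⟨N, fun n hn => not_lt.mp (fun h' => hn (hN n h'))⟩
    exact Set.IsWF.isPWO hb.wellFoundedOn_lt⟩

lemma toHahn_coeff (a : ℤ → ℝ) (h : SuppBelow a) : (toHahn a h).coeff = a := rfl

lemma conv_eq_mul (a b : ℤ → ℝ) (ha : SuppBelow a) (hb : SuppBelow b) (n : ℤ) :
    conv a b n = (toHahn a ha * toHahn b hb).coeff n := by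
  rw [HahnSeries.coeff_mul]
  set s := Finset.antidiagonal (toHahn a ha).isPWO_support (toHahn b hb).isPWO_support n with hs
  have hzero : ∀ k : ℤ, k ∉ s.image Prod.fst → a k * b (n - k) = 0 := by
    intro k hk
    by_contra hne
    apply hk
    refine Finset.mem_image.mpr ⟨(k, n - k), ?_, rfl⟩
    rw [hs, Finset.mem_addAntidiagonal]
    refine ⟨?_, ?_, by ring⟩
    · simp only [HahnSeries.mem_support, toHahn_coeff]
      intro h0; exact hne (by rw [h0, zero_mul])
    · simp only [HahnSeries.mem_support, toHahn_coeff]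
      intro h0; exact hne (by rw [h0, mul_zero])
  have := tsum_eq_sum (L := SummationFilter.unconditional ℤ) (f := fun k : ℤ => a k * b (n - k)) hzero
  rw [conv, this]
  rw [Finset.sum_image]
  · apply Finset.sum_congr rfl
    intro ij hij
    rw [hs, Finset.mem_addAntidiagonal] at hij
    have : n - ij.1 = ij.2 := by omega
    rw [this]; rfl
  · intro x hx y hy hxy
    rw [hs, Finset.mem_coe, Finset.mem_addAntidiagonal] at hx hy
    ext
    · exact hxy
    · omega

/-- A probability distribution on `ℤ`: nonnegative with total sum 1. -/
def IsProbDist (p : ℤ → ℝ) : Prop := (∀ n : ℤ, 0 ≤ p n) ∧ HasSum p 1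

/-- `qt` is the reciprocal sequence `q̃` of `q`, relative to `nstar = n_*(q)`,
the least index where `q` is positive: `q̃` vanishes below `−n_*(q)` and
`(q̃*q)(n) = δ_{n,0}` for all `n`. -/
def IsRecip (q qt : ℤ → ℝ) (nstar : ℤ) : Prop :=
  IsLeast {n : ℤ | 0 < q n} nstar ∧ (∀ n : ℤ, n < -nstar → qt n = 0) ∧
  (∀ n : ℤ, conv qt q n = if n = 0 then (1 : ℝ) else 0)


lemma recip_suppBelow {q qt : ℤ → ℝ} {nstar : ℤ} (h : IsRecip q qt nstar) :
    SuppBelow qt := ⟨-nstar, h.2.1⟩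

lemma hahn_mul_nonneg {x y : HahnSeries ℤ ℝ} (hx : ∀ n, 0 ≤ x.coeff n)
    (hy : ∀ n, 0 ≤ y.coeff n) : ∀ n, 0 ≤ (x * y).coeff n := by
  intro n
  rw [HahnSeries.coeff_mul]
  exact Finset.sum_nonneg fun ij _ => mul_nonneg (hx _) (hy _)

lemma recip_hahn_mul {q qt : ℤ → ℝ} {nstar : ℤ} (h : IsRecip q qt nstar)
    (hqb : SuppBelow q) :
    toHahn qt (recip_suppBelow h) * toHahn q hqb = 1 := by
  ext n
  rw [← conv_eq_mul, h.2.2, HahnSeries.coeff_one]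
  split <;> rfl

/-- The generalized Poisson sequence `P_λ : ℤ → ℝ`,
`P_λ(n) = e^{−λ}·λ^n/n!` for `n ≥ 0` and `P_λ(n) = 0` for `n < 0`. -/
noncomputable def poisson (lam : ℝ) : ℤ → ℝ :=
  fun n => if 0 ≤ n then Real.exp (-lam) * lam ^ n.toNat / (Nat.factorial n.toNat : ℝ) else 0

/-- a-majorization is transitive: `p ≻_a q` and `q ≻_a r` imply
`p ≻_a r`; together with reflexivity (`p ≻_a p`, since `p*p̃ = δ_0 ≥ 0`),
`≻_a` is a preorder. -/
theorem amaj_trans_refl (p q r pt qt rt : ℤ → ℝ) (np nq nr : ℤ)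
    (hp : IsProbDist p) (hq : IsProbDist q) (hr : IsProbDist r)
    (hpb : SuppBelow p) (hqb : SuppBelow q) (hrb : SuppBelow r)
    (hpt : IsRecip p pt np) (hqt : IsRecip q qt nq) (hrt : IsRecip r rt nr)
    (hpq : ∀ n : ℤ, 0 ≤ conv p qt n) (hqr : ∀ n : ℤ, 0 ≤ conv q rt n) :
    (∀ n : ℤ, 0 ≤ conv p rt n) ∧ (∀ n : ℤ, 0 ≤ conv p pt n) := by
  have hptb := recip_suppBelow hpt
  have hqtb := recip_suppBelow hqt
  have hrtb := recip_suppBelow hrt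
  set P := toHahn p hpb
  set Q := toHahn q hqb
  set Pt := toHahn pt hptb
  set Qt := toHahn qt hqtb
  set Rt := toHahn rt hrtb
  have hQtQ : Qt * Q = 1 := recip_hahn_mul hqt hqb
  constructor
  · intro n
    have key : P * Rt = (P * Qt) * (Q * Rt) := by
      rw [mul_assoc, ← mul_assoc Qt, hQtQ, one_mul]
    rw [conv_eq_mul p rt hpb hrtb, key]
    exact hahn_mul_nonneg (fun m => by rw [← conv_eq_mul]; exact hpq m)
      (fun m => by rw [← conv_eq_mul]; exact hqr m) n
  · intro n
    rw [conv_eq_mul p pt hpb hptb, mul_comm, ← conv_eq_mul, hpt.2.2]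
    split <;> norm_num
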